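/- Let α ≥ 1/2, β = √((α+4)/α), b_α = √(1+α(1−β)/2), ρ_k = α^α b_α^{4k+2α}, and 𝔏_k(s) = β^{α/2} e^{(1−β)s/2} ℒ_k^{(α−1)}(βs). Then for each k ∈ ℕ₀, ∫_0^∞ t e^{−t/α} 𝔏_k(t) dP₀(t) = ((α)_k/k!)^{1/2} α² β^{α/2} ρ_k (b_α² − kβ). -/

import Mathlib

open MeasureTheory Real Set

/-- The generalized Laguerre polynomial `L_n^{(α−1)}(x) = Σ_{k=0}^n ((α+k)_{n−k}/(n−k)!) (−x)^k/k!`. -/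
noncomputable def laguerre (α : ℝ) (n : ℕ) (x : ℝ) : ℝ :=
  ∑ k ∈ Finset.range (n + 1),
    (Real.Gamma (α + n) / Real.Gamma (α + k)) / (Nat.factorial (n - k) : ℝ) *
      (-x) ^ k / (Nat.factorial k : ℝ)

/-- The normalized generalized Laguerre polynomial `ℒ_n^{(α−1)} = √(n!/(α)_n) L_n^{(α−1)}`. -/
noncomputable def laguerreN (α : ℝ) (n : ℕ) (x : ℝ) : ℝ :=
  Real.sqrt ((Nat.factorial n : ℝ) / (Real.Gamma (α + n) / Real.Gamma α)) * laguerre α n x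

lemma binom_sum (x : ℝ) (k : ℕ) :
    ∑ j ∈ Finset.range (k+1), (k.choose j : ℝ) * x^j = (1+x)^k := by
  rw [add_comm (1:ℝ) x, add_pow]
  simp [mul_comm]

lemma rec_sum (a x : ℝ) (k : ℕ) :
    ∑ j ∈ Finset.range (k+2), ((k+1).choose j : ℝ) * (a + j) * x^j
      = (1+x) * (∑ j ∈ Finset.range (k+1), (k.choose j : ℝ) * (a + j) * x^j)
        + x*(1+x)^k := by
  have e0 : ∑ j ∈ Finset.range (k+2), ((k+1).choose j : ℝ) * (a + j) * x^j
      = (∑ i ∈ Finset.range (k+1), ((k+1).choose (i+1) : ℝ) * (a + (i+1:ℕ)) * x^(i+1)) + a := by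
    rw [Finset.sum_range_succ' (fun j => ((k+1).choose j : ℝ) * (a + j) * x^j) (k+1)]
    simp
  have h1 : ∑ i ∈ Finset.range (k+1), ((k+1).choose (i+1) : ℝ) * (a + (i+1:ℕ)) * x^(i+1)
      = (∑ i ∈ Finset.range (k+1), (k.choose i : ℝ) * (a + i) * x^i) * x
        + (∑ i ∈ Finset.range (k+1), (k.choose i : ℝ) * x^i) * x
        + ∑ i ∈ Finset.range (k+1), (k.choose (i+1) : ℝ) * (a + (i+1:ℕ)) * x^(i+1) := by
    rw [Finset.sum_mul, Finset.sum_mul, ← Finset.sum_add_distrib, ← Finset.sum_add_distrib]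
    refine Finset.sum_congr rfl fun i _ => ?_
    rw [Nat.choose_succ_succ]
    push_cast
    ring
  have h2 : ∑ i ∈ Finset.range (k+1), (k.choose (i+1) : ℝ) * (a + (i+1:ℕ)) * x^(i+1)
      = (∑ j ∈ Finset.range (k+1), (k.choose j : ℝ) * (a + j) * x^j) - a := by
    have e1 : ∑ j ∈ Finset.range (k+2), (k.choose j : ℝ) * (a + j) * x^j
        = ∑ j ∈ Finset.range (k+1), (k.choose j : ℝ) * (a + j) * x^j := by
      rw [Finset.sum_range_succ]
      simp [Nat.choose_succ_self]
    have e2 := Finset.sum_range_succ' (fun j => ((k.choose j : ℝ)) * (a + j) * x^j) (k+1)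
    rw [e1] at e2
    simp only [Nat.choose_zero_right, Nat.cast_one, Nat.cast_zero, add_zero, pow_zero,
      one_mul, mul_one] at e2
    push_cast at e2 ⊢
    linarith [e2]
  rw [e0, h1, h2, binom_sum]
  ring

lemma mul_sum_choose (a x : ℝ) (k : ℕ) :
    (1+x) * ∑ j ∈ Finset.range (k+1), (k.choose j : ℝ) * (a + j) * x^j
      = a*(1+x)^(k+1) + k*x*(1+x)^k := by
  induction k with
  | zero => simp; ring
  | succ n ih =>
    rw [rec_sum a x n]
    push_cast
    linear_combination (1+x) * ih

/-- With `β = √((α+4)/α)`, `b = √(1+α(1−β)/2)`, `ρ_k = α^α b^{4k+2α}`, and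
`𝔏_k(s) = β^{α/2} e^{(1−β)s/2} ℒ_k^{(α−1)}(βs)`:
`∫₀^∞ t e^{−t/α} 𝔏_k(t) dP₀(t) = ((α)_k/k!)^{1/2} α² β^{α/2} ρ_k (b² − kβ)`. -/
theorem laguerre_texp_inner_product (α β b ρ : ℝ) (k : ℕ) (hα : 1/2 ≤ α)
    (hβ : β = Real.sqrt ((α + 4) / α))
    (hb : b = Real.sqrt (1 + α * (1 - β) / 2))
    (hρ : ρ = α ^ α * b ^ (4 * (k : ℝ) + 2 * α)) :
    ∫ t in Ioi (0 : ℝ),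
        t * Real.exp (-t / α) *
          (β ^ (α / 2) * Real.exp ((1 - β) * t / 2) * laguerreN α k (β * t)) *
          (t ^ (α - 1) * Real.exp (-t) / Real.Gamma α)
      = Real.sqrt ((Real.Gamma (α + k) / Real.Gamma α) / (Nat.factorial k : ℝ)) *
          α ^ 2 * β ^ (α / 2) * ρ * (b ^ 2 - k * β) := by
  have hα0 : (0:ℝ) < α := by linarith
  have hαk : (0:ℝ) < α + k := by positivity
  have hΓα : 0 < Real.Gamma α := Real.Gamma_pos_of_pos hα0
  have hΓαk : 0 < Real.Gamma (α + k) := Real.Gamma_pos_of_pos hαk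
  have hβpos : 0 < β := by
    rw [hβ]; exact Real.sqrt_pos.mpr (by positivity)
  have hβ2 : α * β^2 = α + 4 := by
    rw [hβ, sq_sqrt (by positivity : (0:ℝ) ≤ (α+4)/α)]
    field_simp
  have hβ1 : 1 < β := by nlinarith [hβ2, mul_pos hα0 hβpos, hα0]
  have hbb : α * β < 2 + α := by nlinarith [hβ2, mul_pos hα0 hβpos]
  have hbsq : 0 < 1 + α * (1 - β) / 2 := by nlinarith
  have hb2 : b^2 = 1 + α * (1 - β) / 2 := by rw [hb, sq_sqrt hbsq.le]
  have hbpos : 0 < b := by rw [hb]; exact Real.sqrt_pos.mpr hbsq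
  set c : ℝ := 1/α + 1 + (β - 1)/2 with hc_def
  have hcpos : 0 < c := by
    have h1 : 0 < 1/α := by positivity
    rw [hc_def]; linarith
  have hinv : 1/c = α * b^2 := by
    have hc2 : c = (2 + α + α*β)/(2*α) := by rw [hc_def]; field_simp; ring
    rw [hc2, one_div_div, hb2, div_eq_iff (by positivity : (2+α+α*β) ≠ 0)]
    linear_combination (α^2/2) * hβ2
  have h1u : (1:ℝ) + (-(α * β * b^2)) = b^4 := by
    rw [show b^4 = (b^2)^2 by ring, hb2]
    linear_combination (α/4) * hβ2
  set P := Real.Gamma (α + k) / Real.Gamma α with hPdef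
  have hP : 0 < P := div_pos hΓαk hΓα
  have hkfac : (0:ℝ) < (Nat.factorial k : ℝ) := Nat.cast_pos.mpr k.factorial_pos
  have hN : Real.sqrt ((Nat.factorial k : ℝ)/P) * (P / (Nat.factorial k : ℝ))
      = Real.sqrt (P/(Nat.factorial k : ℝ)) := by
    rw [show ((Nat.factorial k : ℝ))/P = (P/(Nat.factorial k : ℝ))⁻¹ from (inv_div _ _).symm,
      Real.sqrt_inv, inv_mul_eq_div, Real.div_sqrt]
  -- closed form of the binomial sum
  have hsum := mul_sum_choose α (-(α*β*b^2)) k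
  rw [h1u] at hsum
  have hS : ∑ j ∈ Finset.range (k+1), (k.choose j : ℝ) * (α + j) * (-(α*β*b^2))^j
      = (α*(b^4)^(k+1) + k*(-(α*β*b^2))*(b^4)^k) / b^4 := by
    rw [eq_div_iff (by positivity : ((b:ℝ)^4) ≠ 0), mul_comm]
    exact hsum
  -- pointwise rewriting of the integrand
  have hfeq : ∀ t ∈ Ioi (0:ℝ),
      t * Real.exp (-t / α) *
          (β ^ (α / 2) * Real.exp ((1 - β) * t / 2) * laguerreN α k (β * t)) *
          (t ^ (α - 1) * Real.exp (-t) / Real.Gamma α)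
      = ∑ j ∈ Finset.range (k+1),
          (β ^ (α/2) * Real.sqrt ((Nat.factorial k : ℝ) / P)
              * ((Real.Gamma (α+k) / Real.Gamma (α+j)) / (Nat.factorial (k-j) : ℝ))
              * (-β)^j / (Nat.factorial j : ℝ) / Real.Gamma α)
            * (t ^ (α + (j:ℝ)) * Real.exp (-(c*t))) := by
    intro t ht
    have ht0 : (0:ℝ) < t := ht
    simp only [laguerreN, laguerre, ← hPdef, Finset.mul_sum, Finset.sum_mul]
    refine Finset.sum_congr rfl fun j hj => ?_
    have h1 : t ^ (α + (j:ℝ)) = t ^ (α-1) * (t * t^(j:ℕ)) := by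
      rw [show α + (j:ℝ) = (α-1) + (1 + (j:ℝ)) by ring, Real.rpow_add ht0, Real.rpow_add ht0,
        Real.rpow_one, Real.rpow_natCast]
    have h2 : Real.exp (-(c*t)) = Real.exp (-t/α) * (Real.exp ((1-β)*t/2) * Real.exp (-t)) := by
      rw [← Real.exp_add, ← Real.exp_add]
      congr 1
      rw [hc_def]; field_simp; ring
    rw [h1, h2]
    ring
  rw [setIntegral_congr_fun measurableSet_Ioi hfeq]
  rw [integral_finset_sum]
  swap
  · intro j hj
    apply Integrable.const_mul
    have hs : (-1:ℝ) < α + (j:ℝ) := by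
      have : (0:ℝ) ≤ (j:ℝ) := Nat.cast_nonneg j
      linarith
    have := integrableOn_rpow_mul_exp_neg_mul_rpow (s := α + (j:ℝ)) (p := 1) (b := c)
      hs one_pos hcpos
    simpa [Real.rpow_one, IntegrableOn] using this
  have hterm : ∀ j ∈ Finset.range (k+1),
      (∫ t in Ioi (0:ℝ),
        (β ^ (α/2) * Real.sqrt ((Nat.factorial k : ℝ) / P)
              * ((Real.Gamma (α+k) / Real.Gamma (α+j)) / (Nat.factorial (k-j) : ℝ))
              * (-β)^j / (Nat.factorial j : ℝ) / Real.Gamma α)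
            * (t ^ (α + (j:ℝ)) * Real.exp (-(c*t))))
      = (β^(α/2) * Real.sqrt ((Nat.factorial k : ℝ)/P) * Real.Gamma (α+k)
          / (Real.Gamma α * (Nat.factorial k : ℝ)) * (1/c)^(α+1))
        * ((k.choose j : ℝ) * (α + j) * (-(α*β*b^2))^j) := by
    intro j hj
    have hj' : j ≤ k := Nat.lt_succ_iff.mp (Finset.mem_range.mp hj)
    have hΓj : 0 < Real.Gamma (α + j) := Real.Gamma_pos_of_pos (by positivity)
    rw [integral_const_mul]
    have hint : (∫ t in Ioi (0:ℝ), t ^ (α + (j:ℝ)) * Real.exp (-(c*t)))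
        = (1/c)^(α + (j:ℝ) + 1) * Real.Gamma (α + (j:ℝ) + 1) := by
      have := integral_rpow_mul_exp_neg_mul_Ioi (a := α + (j:ℝ) + 1) (r := c)
        (by positivity) hcpos
      rw [show α + (j:ℝ) + 1 - 1 = α + (j:ℝ) by ring] at this
      exact this
    rw [hint]
    have hg : Real.Gamma (α + (j:ℝ) + 1) = (α + (j:ℝ)) * Real.Gamma (α + (j:ℝ)) :=
      Real.Gamma_add_one (by positivity)
    have hcc : ((1:ℝ)/c) ^ (α + (j:ℝ) + 1) = (1/c)^(α+1) * (α*b^2)^(j:ℕ) := by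
      rw [show α + (j:ℝ) + 1 = (α+1) + (j:ℝ) by ring, Real.rpow_add (by positivity),
        Real.rpow_natCast, hinv]
    rw [hg, hcc, Nat.cast_choose ℝ hj']
    have hfj : ((Nat.factorial j : ℝ)) ≠ 0 := by positivity
    have hfkj : ((Nat.factorial (k-j) : ℝ)) ≠ 0 := by positivity
    have hfk : ((Nat.factorial k : ℝ)) ≠ 0 := ne_of_gt hkfac
    field_simp
    ring
  rw [Finset.sum_congr rfl hterm, ← Finset.mul_sum, hS]
  -- final algebra
  have hE1 : β^(α/2) * Real.sqrt ((Nat.factorial k : ℝ)/P) * Real.Gamma (α+k)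
      / (Real.Gamma α * (Nat.factorial k : ℝ)) * (1/c)^(α+1)
      = β^(α/2) * Real.sqrt (P/(Nat.factorial k : ℝ)) * (1/c)^(α+1) := by
    rw [← hN]
    rw [hPdef]
    field_simp
  rw [hE1]
  have hE2 : ((1:ℝ)/c)^(α+1) = (α^α * α) * (b^(2*α) * b^2) := by
    rw [hinv, Real.mul_rpow hα0.le (by positivity)]
    congr 1
    · rw [Real.rpow_add hα0, Real.rpow_one]
    · rw [← Real.rpow_natCast b 2, ← Real.rpow_mul hbpos.le,
        show ((2:ℕ):ℝ) * (α+1) = 2*α + ((2:ℕ):ℝ) by push_cast; ring,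
        Real.rpow_add hbpos]
  have hE3 : b^(4*(k:ℝ)+2*α) = ((b:ℝ)^4)^k * b^(2*α) := by
    rw [Real.rpow_add hbpos,
      show (4*(k:ℝ)) = ((4*k:ℕ):ℝ) by push_cast; ring,
      Real.rpow_natCast, pow_mul]
  rw [hE2, hρ, hE3]
  have hbne : (b:ℝ) ≠ 0 := ne_of_gt hbpos
  field_simp
  ring
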